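/- Let T be a Silver tree, k ∈ ℕ, and let σ be a function on [T] such that for every x ∈ [T], σ(x) : ℕ → (finite subsets of ℕ), with |σ(x)(n)| ≤ 2^{kn} for all x ∈ [T] and n ∈ ℕ, and such that for each n the map x ↦ σ(x)(n) is locally constant on [T] (continuous with respect to the discrete topology on finite subsets of ℕ). Then there exist a Silver tree T' ⊆ T and τ : ℕ → (finite subsets of ℕ) with |τ(n)| ≤ 2^{(k+1)n} for all n, such that for every x ∈ [T'] and every n, σ(x)(n) ⊆ τ(n). -/

import Mathlib

/-- `T` is a tree of finite binary sequences: closed under initial segments. -/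
def IsTree (T : Set (List Bool)) : Prop :=
  ∀ t ∈ T, ∀ k : ℕ, t.take k ∈ T

/-- `t` is a splitting node of `T`: it lies in `T` and both its one-bit extensions do. -/
def SplitNode (T : Set (List Bool)) (t : List Bool) : Prop :=
  t ∈ T ∧ t ++ [false] ∈ T ∧ t ++ [true] ∈ T

/-- `T` is a perfect tree: a nonempty tree in which every node extends to a splitting node. -/
def IsPerfect (T : Set (List Bool)) : Prop :=
  IsTree T ∧ T.Nonempty ∧ ∀ t ∈ T, ∃ s, t <+: s ∧ SplitNode T s

/-- `T` is a Silver (uniform perfect) tree: perfect, and nodes of equal length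
have the same one-bit extensions in `T`. -/
def IsSilver (T : Set (List Bool)) : Prop :=
  IsPerfect T ∧ ∀ s ∈ T, ∀ t ∈ T, s.length = t.length →
    ∀ i : Bool, (s ++ [i] ∈ T ↔ t ++ [i] ∈ T)

/-- The body `[T]` of a tree: all infinite branches whose finite initial
segments all lie in `T`. -/
def body (T : Set (List Bool)) : Set (ℕ → Bool) :=
  { x | ∀ n : ℕ, (List.ofFn fun i : Fin n => x i) ∈ T }

/-! ### treeOf -/

def treeOf (B : ℕ → Set Bool) : Set (List Bool) :=
  { t | ∀ i : ℕ, ∀ h : i < t.length, t[i] ∈ B i }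

lemma mem_treeOf_append (B : ℕ → Set Bool) (t : List Bool) (b : Bool) :
    t ++ [b] ∈ treeOf B ↔ t ∈ treeOf B ∧ b ∈ B t.length := by
  constructor
  · intro h
    refine ⟨fun i hi => ?_, ?_⟩
    · have := h i (by simp; omega)
      rwa [List.getElem_append_left hi] at this
    · have := h t.length (by simp)
      rw [List.getElem_append_right (le_refl _)] at this
      simpa using this
  · rintro ⟨h1, h2⟩ i hi
    simp only [List.length_append, List.length_cons, List.length_nil] at hi
    rcases lt_or_ge i t.length with hlt | hge
    · rw [List.getElem_append_left hlt]; exact h1 i hlt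
    · have : i = t.length := by omega
      subst this
      rw [List.getElem_append_right (le_refl _)]
      simpa using h2

lemma treeOf_isTree (B : ℕ → Set Bool) : IsTree (treeOf B) := by
  intro t ht k i hi
  rw [List.getElem_take]
  exact ht i (by simp at hi; omega)

lemma mem_body_treeOf (B : ℕ → Set Bool) (x : ℕ → Bool) :
    x ∈ body (treeOf B) ↔ ∀ i, x i ∈ B i := by
  constructor
  · intro h i
    have := h (i+1) i (by simp)
    rwa [List.getElem_ofFn] at this
  · intro h n i hi
    rw [List.getElem_ofFn]
    exact h i

lemma extend_treeOf (B : ℕ → Set Bool) (hne : ∀ i, (B i).Nonempty)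
    (t : List Bool) (ht : t ∈ treeOf B) (p : ℕ) (hp : t.length ≤ p) :
    ∃ u, t <+: u ∧ u ∈ treeOf B ∧ u.length = p := by
  refine ⟨t ++ List.ofFn (fun j : Fin (p - t.length) => (hne (t.length + j)).choose),
    List.prefix_append _ _, ?_, by simp; omega⟩
  intro i hi
  simp only [List.length_append, List.length_ofFn] at hi
  rcases lt_or_ge i t.length with hlt | hge
  · rw [List.getElem_append_left hlt]; exact ht i hlt
  · rw [List.getElem_append_right hge, List.getElem_ofFn]
    have : t.length + (i - t.length) = i := by omega
    simpa [this] using (hne (t.length + (i - t.length))).choose_spec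

lemma treeOf_isSilver (B : ℕ → Set Bool) (hne : ∀ i, (B i).Nonempty)
    (hsplit : ∀ l, ∃ p, l ≤ p ∧ ∀ b : Bool, b ∈ B p) : IsSilver (treeOf B) := by
  refine ⟨⟨treeOf_isTree B, ⟨[], by intro i hi; simp at hi⟩, ?_⟩, ?_⟩
  · intro t ht
    obtain ⟨p, hlp, hbp⟩ := hsplit t.length
    obtain ⟨u, htu, hu, hup⟩ := extend_treeOf B hne t ht p hlp
    refine ⟨u, htu, hu, ?_, ?_⟩ <;>
      exact (mem_treeOf_append B u _).2 ⟨hu, by rw [hup]; exact hbp _⟩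
  · intro s hs t ht hlen i
    rw [mem_treeOf_append, mem_treeOf_append, hlen]
    exact ⟨fun ⟨_, h⟩ => ⟨ht, h⟩, fun ⟨_, h⟩ => ⟨hs, h⟩⟩

/-! ### extracting B from a Silver tree -/

def Bof (T : Set (List Bool)) : ℕ → Set Bool :=
  fun n => { b | ∃ t ∈ T, t.length = n ∧ t ++ [b] ∈ T }

lemma exists_node (T : Set (List Bool)) (hT : IsSilver T) (n : ℕ) :
    ∃ t ∈ T, t.length = n := by
  induction n with
  | zero =>
    obtain ⟨t, ht⟩ := hT.1.2.1
    exact ⟨t.take 0, hT.1.1 t ht 0, by simp⟩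
  | succ n ih =>
    obtain ⟨t, ht, hlen⟩ := ih
    obtain ⟨s, hts, hs, hsf, _⟩ := hT.1.2.2 t ht
    refine ⟨(s ++ [false]).take (n+1), hT.1.1 _ hsf _, ?_⟩
    have : n + 1 ≤ s.length + 1 := by
      have := hts.length_le; omega
    simp; omega

lemma mem_append_iff_Bof (T : Set (List Bool)) (hT : IsSilver T) (t : List Bool) (b : Bool) :
    t ++ [b] ∈ T ↔ t ∈ T ∧ b ∈ Bof T t.length := by
  constructor
  · intro h
    have ht : t ∈ T := by
      have := hT.1.1 _ h t.length
      simpa [List.take_append] using this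
    exact ⟨ht, t, ht, rfl, h⟩
  · rintro ⟨ht, t', ht', hlen, hb⟩
    exact (hT.2 t' ht' t ht hlen b).1 hb

lemma Bof_nonempty (T : Set (List Bool)) (hT : IsSilver T) (n : ℕ) :
    (Bof T n).Nonempty := by
  obtain ⟨t, ht, hlen⟩ := exists_node T hT (n+1)
  have hn : n < t.length := by omega
  have heq : t.take n ++ [t[n]] = t := by
    simp [hlen, List.take_of_length_le (le_of_eq hlen)]
  refine ⟨t[n], t.take n, hT.1.1 t ht n, by simp [hlen], ?_⟩
  rw [heq]; exact ht

lemma Bof_split_unbounded (T : Set (List Bool)) (hT : IsSilver T) (l : ℕ) :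
    ∃ p, l ≤ p ∧ ∀ b : Bool, b ∈ Bof T p := by
  obtain ⟨t, ht, hlen⟩ := exists_node T hT l
  obtain ⟨s, hts, hs, hsf, hst⟩ := hT.1.2.2 t ht
  refine ⟨s.length, by rw [← hlen]; exact hts.length_le, fun b => ⟨s, hs, rfl, ?_⟩⟩
  cases b
  · exact hsf
  · exact hst

lemma treeOf_subset (T : Set (List Bool)) (hT : IsSilver T) (B : ℕ → Set Bool)
    (hB : ∀ i, B i ⊆ Bof T i) : treeOf B ⊆ T := by
  intro t
  induction t using List.reverseRecOn with
  | nil =>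
    intro _
    obtain ⟨u, hu⟩ := hT.1.2.1
    have := hT.1.1 u hu 0
    simpa using this
  | append_singleton t b ih =>
    intro h
    rw [mem_treeOf_append] at h
    exact (mem_append_iff_Bof T hT t b).2 ⟨ih h.1, hB _ h.2⟩


lemma body_isCompact (T : Set (List Bool)) : IsCompact (body T) := by
  have hclosed : IsClosed (body T) := by
    have : body T = ⋂ n : ℕ, (fun x : ℕ → Bool => fun i : Fin n => x i) ⁻¹'
        { v : Fin n → Bool | List.ofFn v ∈ T } := by
      ext x; simp [body, Set.mem_iInter]
    rw [this]
    exact isClosed_iInter fun n =>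
      IsClosed.preimage (f := fun x : ℕ → Bool => fun i : Fin n => x (i : ℕ))
        (continuous_pi fun i => continuous_apply (i : ℕ)) (isClosed_discrete _)
  exact hclosed.isCompact

lemma uniform_modulus (T : Set (List Bool)) (σ : (ℕ → Bool) → ℕ → Finset ℕ) (n : ℕ)
    (hloc : ∀ x ∈ body T, ∃ m : ℕ, ∀ y ∈ body T,
      (∀ i < m, y i = x i) → σ y n = σ x n) :
    ∃ m : ℕ, ∀ y ∈ body T, ∀ z ∈ body T, (∀ i < m, z i = y i) → σ z n = σ y n := by
  classical
  set mx : body T → ℕ := fun x => (hloc x x.2).choose with hmx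
  have hspec : ∀ x : body T, ∀ y ∈ body T, (∀ i < mx x, y i = x.1 i) → σ y n = σ x.1 n :=
    fun x => (hloc x x.2).choose_spec
  set U : body T → Set (ℕ → Bool) := fun x => { y | ∀ i < mx x, y i = x.1 i } with hU
  have hopen : ∀ x : body T, IsOpen (U x) := by
    intro x
    have : U x = ⋂ i ∈ Finset.range (mx x), (fun y : ℕ → Bool => y i) ⁻¹' {x.1 i} := by
      ext y; simp [hU]
    rw [this]
    exact isOpen_biInter_finset fun i _ =>
      IsOpen.preimage (continuous_apply i) (isOpen_discrete _)
  have hcover : body T ⊆ ⋃ x : body T, U x := fun y hy =>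
    Set.mem_iUnion.2 ⟨⟨y, hy⟩, fun i _ => rfl⟩
  obtain ⟨F, hF⟩ := (body_isCompact T).elim_finite_subcover U hopen hcover
  refine ⟨F.sup mx, ?_⟩
  intro y hy z hz hagree
  obtain ⟨x, hxF, hyx⟩ : ∃ x ∈ F, y ∈ U x := by
    have := hF hy
    simpa using this
  have hmle : mx x ≤ F.sup mx := Finset.le_sup hxF
  have hzy : ∀ i < mx x, z i = x.1 i := fun i hi => (hagree i (lt_of_lt_of_le hi hmle)).trans (hyx i hi)
  rw [hspec x z hz hzy, hspec x y hy hyx]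


lemma mem_body_of_forall (T : Set (List Bool)) (hT : IsSilver T) (x : ℕ → Bool)
    (hx : ∀ i, x i ∈ Bof T i) : x ∈ body T := by
  intro n
  apply treeOf_subset T hT (fun i => {b | b = x i}) (fun i b hb => hb ▸ hx i)
  intro i hi
  rw [List.getElem_ofFn]
  rfl


open Classical in
noncomputable def pat (s : ℕ → ℕ) (f : ℕ → Bool) (n : ℕ) (a : Fin n → Bool) : ℕ → Bool :=
  fun i => if h : ∃ j : Fin n, s j = i then a h.choose else f i

lemma pat_pos (s : ℕ → ℕ) (f : ℕ → Bool) (n : ℕ) (a : Fin n → Bool) (i : ℕ)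
    (h : ∃ j : Fin n, s j = i) : pat s f n a i = a h.choose := dif_pos h

lemma pat_neg (s : ℕ → ℕ) (f : ℕ → Bool) (n : ℕ) (a : Fin n → Bool) (i : ℕ)
    (h : ¬ ∃ j : Fin n, s j = i) : pat s f n a i = f i := dif_neg h

lemma pat_mem_body (T : Set (List Bool)) (hT : IsSilver T) (s : ℕ → ℕ) (f : ℕ → Bool)
    (hsSplit : ∀ j, ∀ b : Bool, b ∈ Bof T (s j)) (hfB : ∀ i, f i ∈ Bof T i)
    (n : ℕ) (a : Fin n → Bool) : pat s f n a ∈ body T := by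
  apply mem_body_of_forall T hT
  intro i
  by_cases h : ∃ j : Fin n, s j = i
  · rw [pat_pos s f n a i h]
    generalize a h.choose = b
    rw [← h.choose_spec]
    exact hsSplit _ _
  · rw [pat_neg s f n a i h]
    exact hfB i


/-- Fusion for Silver forcing preserving unreachability: if `σ` assigns, locally
constantly on `[T]`, slaloms of width `≤ 2^{kn}`, then some Silver subtree `T' ⊆ T`
admits a single slalom `τ` of width `≤ 2^{(k+1)n}` covering all `σ(x)`, `x ∈ [T']`. -/
theorem silver_fusion_slalom (T : Set (List Bool)) (hT : IsSilver T) (k : ℕ)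
    (σ : (ℕ → Bool) → ℕ → Finset ℕ)
    (hcard : ∀ x ∈ body T, ∀ n : ℕ, (σ x n).card ≤ 2 ^ (k * n))
    (hloc : ∀ n : ℕ, ∀ x ∈ body T, ∃ m : ℕ, ∀ y ∈ body T,
      (∀ i < m, y i = x i) → σ y n = σ x n) :
    ∃ T' : Set (List Bool), ∃ τ : ℕ → Finset ℕ,
      IsSilver T' ∧ T' ⊆ T ∧ (∀ n : ℕ, (τ n).card ≤ 2 ^ ((k + 1) * n)) ∧
      ∀ x ∈ body T', ∀ n : ℕ, σ x n ⊆ τ n := by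
  classical
  -- default bits
  have hne := Bof_nonempty T hT
  set f : ℕ → Bool := fun i => (hne i).choose with hf
  have hfB : ∀ i, f i ∈ Bof T i := fun i => (hne i).choose_spec
  -- uniform moduli
  have hum : ∀ n, ∃ m, ∀ y ∈ body T, ∀ z ∈ body T,
      (∀ i < m, z i = y i) → σ z n = σ y n :=
    fun n => uniform_modulus T σ n (hloc n)
  set m : ℕ → ℕ := fun n => (hum n).choose with hm
  have hmspec : ∀ n, ∀ y ∈ body T, ∀ z ∈ body T,
      (∀ i < m n, z i = y i) → σ z n = σ y n := fun n => (hum n).choose_spec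
  -- split positions
  choose P hP1 hP2 using Bof_split_unbounded T hT
  set s : ℕ → ℕ :=
    fun n => Nat.rec (P (m 0)) (fun n prev => P (max (prev + 1) (m (n+1)))) n with hs
  have hsSplit : ∀ n, ∀ b : Bool, b ∈ Bof T (s n) := by
    intro n b
    cases n with
    | zero => exact hP2 (m 0) b
    | succ n => exact hP2 _ b
  have hsm : ∀ n, m n ≤ s n := by
    intro n
    cases n with
    | zero => exact hP1 (m 0)
    | succ n => exact le_trans (le_max_right _ _) (hP1 _)
  have hsmono : StrictMono s := by
    apply strictMono_nat_of_lt_succ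
    intro n
    have h1 : s n + 1 ≤ P (max (s n + 1) (m (n+1))) :=
      le_trans (le_max_left _ _) (hP1 _)
    exact lt_of_lt_of_le (Nat.lt_succ_self _) h1
  -- the new coordinate sets
  set B' : ℕ → Set Bool :=
    fun i => if ∃ j : ℕ, s j = i then Set.univ else {f i} with hB'
  have hB'sub : ∀ i, B' i ⊆ Bof T i := by
    intro i b hb
    by_cases h : ∃ j : ℕ, s j = i
    · obtain ⟨j, rfl⟩ := h
      exact hsSplit j b
    · rw [hB'] at hb
      simp only [if_neg h, Set.mem_singleton_iff] at hb
      subst hb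
      exact hfB i
  have hB'ne : ∀ i, (B' i).Nonempty := by
    intro i
    by_cases h : ∃ j : ℕ, s j = i <;> simp [hB', h]
  have hB'split : ∀ l, ∃ p, l ≤ p ∧ ∀ b : Bool, b ∈ B' p := by
    intro l
    refine ⟨s l, hsmono.le_apply, fun b => ?_⟩
    have hex : ∃ j : ℕ, s j = s l := ⟨l, rfl⟩
    simp [hB', hex]
  have hpatT : ∀ n (a : Fin n → Bool), pat s f n a ∈ body T :=
    pat_mem_body T hT s f hsSplit hfB
  refine ⟨treeOf B',
    fun n => (Finset.univ : Finset (Fin n → Bool)).biUnion (fun a => σ (pat s f n a) n),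
    treeOf_isSilver B' hB'ne hB'split, treeOf_subset T hT B' hB'sub, ?_, ?_⟩
  · -- cardinality bound
    intro n
    calc (Finset.univ.biUnion fun a : Fin n → Bool => σ (pat s f n a) n).card
        ≤ ∑ a : Fin n → Bool, (σ (pat s f n a) n).card := Finset.card_biUnion_le
      _ ≤ ∑ _a : Fin n → Bool, 2 ^ (k * n) :=
          Finset.sum_le_sum fun a _ => hcard (pat s f n a) (hpatT n a) n
      _ = 2 ^ n * 2 ^ (k * n) := by
          rw [Finset.sum_const, smul_eq_mul, Finset.card_univ]
          congr 1
          simp [Fintype.card_fun]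
      _ = 2 ^ ((k + 1) * n) := by
          rw [← pow_add]
          ring_nf
  · -- covering
    intro x hx n
    have hxT : x ∈ body T := fun n' => treeOf_subset T hT B' hB'sub (hx n')
    set a : Fin n → Bool := fun j => x (s j) with ha
    have hagree : ∀ i < m n, x i = pat s f n a i := by
      intro i hi
      have hisn : i < s n := lt_of_lt_of_le hi (hsm n)
      by_cases h : ∃ j : Fin n, s j = i
      · rw [pat_pos s f n a i h, ha]
        simp only
        rw [h.choose_spec]
      · rw [pat_neg s f n a i h]
        have hxi : x i ∈ B' i := (mem_body_treeOf B' x).1 hx i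
        have hns : ¬∃ j : ℕ, s j = i := by
          rintro ⟨j, hj⟩
          rcases lt_or_ge j n with hjn | hjn
          · exact h ⟨⟨j, hjn⟩, hj⟩
          · have h2 : s n ≤ s j := hsmono.monotone hjn
            omega
        rw [hB'] at hxi
        simpa [if_neg hns] using hxi
    have key : σ x n = σ (pat s f n a) n :=
      hmspec n (pat s f n a) (hpatT n a) x hxT hagree
    rw [key]
    exact Finset.subset_biUnion_of_mem (fun a => σ (pat s f n a) n) (Finset.mem_univ a)
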